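/- arXiv:2207.12765 — 2 statements merged into one kernel-verified Lean document; each statement's English description precedes it below -/
import Mathlib

section
/- Let X be a strongly 0-dimensional metrizable space. Then the set of all gap-like metrics in Met(X) is comeager in the space (Met(X), D_X). -/
open Set
open scoped ENNReal

/-- The space `Met(X)` of metrics generating the topology of `X`. -/
def MetricCompat (X : Type*) [t : TopologicalSpace X] : Type _ :=
  { m : MetricSpace X // m.toUniformSpace.toTopologicalSpace = t }

namespace MetricCompat

variable {X : Type*} [TopologicalSpace X]

/-- The distance function of an element of `Met(X)`. -/
noncomputable def dist (d : MetricCompat X) (x y : X) : ℝ := d.1.dist x y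

/-- The supremum distance `D_X`, valued in `[0,∞]`. -/
noncomputable def supDist (d e : MetricCompat X) : ℝ≥0∞ :=
  ⨆ p : X × X, ENNReal.ofReal |d.dist p.1 p.2 - e.dist p.1 p.2|

/-- The topology on `Met(X)` induced by the open balls of `D_X`. -/
noncomputable instance : TopologicalSpace (MetricCompat X) :=
  TopologicalSpace.generateFrom
    { U | ∃ (d : MetricCompat X) (r : ℝ≥0∞), 0 < r ∧ U = { e | supDist d e < r } }

end MetricCompat

/-- A space is strongly `0`-dimensional if disjoint closed sets are separated by a clopen set. -/
def StronglyZeroDim (X : Type*) [TopologicalSpace X] : Prop :=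
  ∀ A B : Set X, IsClosed A → IsClosed B → Disjoint A B →
    ∃ V : Set X, IsClopen V ∧ A ⊆ V ∧ Disjoint V B

/-- A metric `d` is gap-like if for every `p`, the set `{d(p,x) : x ∈ X}` is not dense in
any neighborhood of `0` in `[0,∞)`. -/
def GapLike {X : Type*} [TopologicalSpace X] (d : MetricCompat X) : Prop :=
  ∀ p : X, ¬ ∃ U : Set ℝ, U ∈ nhdsWithin 0 (Set.Ici 0) ∧ U ⊆ Set.Ici 0 ∧
    U ⊆ closure { r : ℝ | ∃ x : X, d.dist p x = r }

namespace MetricCompat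

variable {X : Type*} [TopologicalSpace X]

lemma supDist_self (d : MetricCompat X) : supDist d d = 0 := by
  refine le_antisymm (iSup_le fun p => ?_) zero_le
  simp

lemma supDist_triangle (a b c : MetricCompat X) :
    supDist a c ≤ supDist a b + supDist b c := by
  refine iSup_le fun p => ?_
  calc ENNReal.ofReal |a.dist p.1 p.2 - c.dist p.1 p.2|
      ≤ ENNReal.ofReal (|a.dist p.1 p.2 - b.dist p.1 p.2| + |b.dist p.1 p.2 - c.dist p.1 p.2|) :=
        ENNReal.ofReal_le_ofReal (abs_sub_le _ _ _)
    _ = ENNReal.ofReal |a.dist p.1 p.2 - b.dist p.1 p.2| +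
        ENNReal.ofReal |b.dist p.1 p.2 - c.dist p.1 p.2| :=
        ENNReal.ofReal_add (abs_nonneg _) (abs_nonneg _)
    _ ≤ supDist a b + supDist b c :=
        add_le_add (le_iSup (fun p : X × X => ENNReal.ofReal |a.dist p.1 p.2 - b.dist p.1 p.2|) p)
          (le_iSup (fun p : X × X => ENNReal.ofReal |b.dist p.1 p.2 - c.dist p.1 p.2|) p)

lemma supDist_le_ofReal {d e : MetricCompat X} {η : ℝ}
    (h : ∀ x y, |e.dist x y - d.dist x y| ≤ η) : supDist d e ≤ ENNReal.ofReal η :=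
  iSup_le fun p => ENNReal.ofReal_le_ofReal (by rw [abs_sub_comm]; exact h p.1 p.2)

lemma abs_lt_of_supDist_lt {d e : MetricCompat X} {δ : ℝ} (hδ : 0 < δ)
    (h : supDist d e < ENNReal.ofReal δ) (x y : X) : |d.dist x y - e.dist x y| < δ := by
  have := lt_of_le_of_lt
    (le_iSup (fun p : X × X => ENNReal.ofReal |d.dist p.1 p.2 - e.dist p.1 p.2|) (x, y)) h
  rwa [ENNReal.ofReal_lt_ofReal_iff hδ] at this

lemma isOpen_ball (d : MetricCompat X) {r : ℝ≥0∞} (hr : 0 < r) :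
    IsOpen { e | supDist d e < r } :=
  TopologicalSpace.isOpen_generateFrom_of_mem ⟨d, r, hr, rfl⟩

lemma exists_ball_subset {U : Set (MetricCompat X)} (hU : IsOpen U) :
    ∀ d ∈ U, ∃ r : ℝ≥0∞, 0 < r ∧ { e | supDist d e < r } ⊆ U := by
  have hU' : TopologicalSpace.GenerateOpen
      { U | ∃ (d : MetricCompat X) (r : ℝ≥0∞), 0 < r ∧ U = { e | supDist d e < r } } U := hU
  clear hU
  induction hU' with
  | basic U hUS =>
    obtain ⟨d₀, r₀, hr₀, rfl⟩ := hUS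
    intro d hd
    obtain ⟨c, hc1, hc2⟩ := exists_between (show supDist d₀ d < r₀ from hd)
    refine ⟨c - supDist d₀ d, tsub_pos_of_lt hc1, fun e he => ?_⟩
    have : supDist d₀ e ≤ supDist d₀ d + (c - supDist d₀ d) :=
      le_trans (supDist_triangle d₀ d e) (add_le_add le_rfl he.le)
    rw [add_tsub_cancel_of_le hc1.le] at this
    exact lt_of_le_of_lt this hc2
  | univ => exact fun d _ => ⟨1, zero_lt_one, subset_univ _⟩
  | inter U V hU hV IHU IHV =>
    intro d hd
    obtain ⟨r₁, hr₁, h₁⟩ := IHU d hd.1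
    obtain ⟨r₂, hr₂, h₂⟩ := IHV d hd.2
    refine ⟨min r₁ r₂, lt_min hr₁ hr₂, fun e he => ?_⟩
    have he' : supDist d e < min r₁ r₂ := he
    exact ⟨h₁ (lt_of_lt_of_le he' (min_le_left _ _)), h₂ (lt_of_lt_of_le he' (min_le_right _ _))⟩
  | sUnion S hS IH =>
    rintro d ⟨s, hsS, hds⟩
    obtain ⟨r, hr, h⟩ := IH s hsS d hds
    exact ⟨r, hr, fun e he => ⟨s, hsS, h he⟩⟩

end MetricCompat

universe u

/-- In a strongly zero-dimensional metric space, for every `η > 0` there is a partition of the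
space into clopen sets of diameter at most `η`. -/
lemma clopen_partition_of_stronglyZeroDim {Y : Type u} [MetricSpace Y]
    (hY : StronglyZeroDim Y) {η : ℝ} (hη : 0 < η) :
    ∃ (ι : Type u) (P : ι → Set Y), (∀ i, IsClopen (P i)) ∧ Pairwise (Function.onFun Disjoint P) ∧
      (∀ x, ∃ i, x ∈ P i) ∧ ∀ i, ∀ x ∈ P i, ∀ y ∈ P i, dist x y ≤ η := by
  classical
  set s : Y → Set Y := fun c => Metric.ball c (η / 2) with hs
  have ho : ∀ c, IsOpen (s c) := fun c => Metric.isOpen_ball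
  have hcov : ∀ x, ∃ c, x ∈ s c := fun x => ⟨x, Metric.mem_ball_self (by positivity)⟩
  -- well-order the index type
  obtain ⟨_, wf⟩ := exists_wellOrder Y
  set ind : Y → Y := fun x => wellFounded_lt.min { i : Y | x ∈ s i } (hcov x) with hind
  have mem_ind : ∀ x, x ∈ s (ind x) := fun x => wellFounded_lt.min_mem _ (hcov x)
  have nmem_of_lt_ind : ∀ {x i}, i < ind x → x ∉ s i := fun {x i} hlt hxi =>
    wellFounded_lt.not_lt_min { i : Y | x ∈ s i } hxi hlt
  have pow_pos : ∀ k : ℕ, (0:ℝ) < 2⁻¹ ^ k := fun k => by positivity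
  -- Rudin's construction
  set D : ℕ → Y → Set Y := fun n =>
    Nat.strongRec (fun n D' i =>
      ⋃ (x : Y) (_ : ind x = i) (_ : Metric.ball x (3 * 2⁻¹ ^ n) ⊆ s i)
        (_ : ∀ (m : ℕ) (H : m < n), ∀ (j : Y), x ∉ D' m H j), Metric.ball x (2⁻¹ ^ n)) n with hD
  have Dn : ∀ n i, D n i = ⋃ (x : Y) (_ : ind x = i) (_ : Metric.ball x (3 * 2⁻¹ ^ n) ⊆ s i)
      (_ : ∀ m < n, ∀ (j : Y), x ∉ D m j), Metric.ball x (2⁻¹ ^ n) := fun n i => by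
    simp only [hD]
    rw [Nat.strongRecOn'_beta]
  have memD : ∀ {n i y}, y ∈ D n i ↔ ∃ x : Y, ind x = i ∧
      Metric.ball x (3 * 2⁻¹ ^ n) ⊆ s i ∧ (∀ m < n, ∀ (j : Y), x ∉ D m j) ∧
      dist y x < 2⁻¹ ^ n := by
    intro n i y
    rw [Dn n i]
    simp only [mem_iUnion, Metric.mem_ball, exists_prop]
  have Dopen : ∀ n i, IsOpen (D n i) := fun n i => by
    rw [Dn]
    iterate 4 refine isOpen_iUnion fun _ => ?_
    exact Metric.isOpen_ball
  have HDS : ∀ n i, D n i ⊆ s i := fun n i x => by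
    rw [memD]
    rintro ⟨y, rfl, hsub, -, hyx⟩
    refine hsub ?_
    rw [Metric.mem_ball]
    calc dist x y < 2⁻¹ ^ n := hyx
      _ ≤ 3 * 2⁻¹ ^ n := by nlinarith [pow_pos n]
  have Dcov : ∀ x, ∃ n i, x ∈ D n i := fun x => by
    obtain ⟨n, hn⟩ : ∃ n : ℕ, Metric.ball x (3 * 2⁻¹ ^ n) ⊆ s (ind x) := by
      rcases Metric.isOpen_iff.1 (ho (ind x)) x (mem_ind x) with ⟨ε, ε0, hε⟩
      obtain ⟨n, hn⟩ := exists_pow_lt_of_lt_one (show (0:ℝ) < ε / 3 by linarith)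
        (by norm_num : (2⁻¹ : ℝ) < 1)
      exact ⟨n, Subset.trans (Metric.ball_subset_ball (by linarith)) hε⟩
    by_contra! h
    apply h n (ind x)
    exact memD.2 ⟨x, rfl, hn, fun _ _ _ => h _ _, by simpa using pow_pos n⟩
  -- separation of distinct pieces at the same level
  have sep' : ∀ n : ℕ, ∀ i j : Y, i < j → ∀ x ∈ D n i, ∀ y ∈ D n j,
      (2⁻¹:ℝ) ^ n ≤ dist x y := by
    intro n i j hij x hx y hy
    rcases memD.1 hx with ⟨x', hindx, hsubx, -, hxx'⟩
    rcases memD.1 hy with ⟨y', hindy, -, -, hyy'⟩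
    have hy's : y' ∉ s i := nmem_of_lt_ind (by rw [hindy]; exact hij)
    have h3 : 3 * (2⁻¹:ℝ) ^ n ≤ dist y' x' := by
      by_contra hlt
      exact hy's (hsubx (by rw [Metric.mem_ball]; linarith))
    have := dist_triangle y' y x'
    have := dist_triangle y x x'
    have h1 : dist y' y = dist y y' := dist_comm _ _
    have h2 : dist x y = dist y x := dist_comm _ _
    linarith
  have sep : ∀ n : ℕ, ∀ i j : Y, i ≠ j → ∀ x ∈ D n i, ∀ y ∈ D n j,
      (2⁻¹:ℝ) ^ n ≤ dist x y := by
    intro n i j hij x hx y hy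
    rcases hij.lt_or_gt with h | h
    · exact sep' n i j h x hx y hy
    · rw [dist_comm]; exact sep' n j i h y hy x hx
  -- the levels
  set W : ℕ → Set Y := fun n => ⋃ i, D n i with hW
  have Wopen : ∀ n, IsOpen (W n) := fun n => isOpen_iUnion fun i => Dopen n i
  set E : ℕ × ℕ → Set Y := fun nk =>
    { x | ∀ y, y ∉ W nk.1 → 1 / (nk.2 + 1 : ℝ) ≤ dist x y } with hE
  have Eclosed : ∀ nk, IsClosed (E nk) := by
    intro nk
    have : E nk = ⋂ (y : Y) (_ : y ∉ W nk.1), { x | 1 / (nk.2 + 1 : ℝ) ≤ dist x y } := by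
      ext x; simp [hE]
    rw [this]
    exact isClosed_iInter fun y => isClosed_iInter fun _ =>
      isClosed_le continuous_const (Continuous.dist continuous_id continuous_const)
  have EsubW : ∀ nk, E nk ⊆ W nk.1 := by
    intro nk x hx
    by_contra hxW
    have := hx x hxW
    simp at this
    have : (0:ℝ) < 1 / (nk.2 + 1 : ℝ) := by positivity
    have h0 := hx x hxW
    rw [dist_self] at h0
    linarith
  have Ecov : ∀ x, ∃ nk : ℕ × ℕ, x ∈ E nk := by
    intro x
    obtain ⟨n, i, hni⟩ := Dcov x
    have hxW : x ∈ W n := mem_iUnion.2 ⟨i, hni⟩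
    rcases Metric.isOpen_iff.1 (Wopen n) x hxW with ⟨ε, ε0, hε⟩
    obtain ⟨k, hk⟩ := exists_nat_one_div_lt ε0
    refine ⟨(n, k), fun y hy => ?_⟩
    by_contra hlt
    push_neg at hlt
    exact hy (hε (by rw [Metric.mem_ball, dist_comm]; linarith))
  -- clopen interpolation
  choose V hVclopen hEV hVdisj using fun nk : ℕ × ℕ =>
    hY (E nk) (W nk.1)ᶜ (Eclosed nk) (Wopen nk.1).isClosed_compl
      (Set.disjoint_left.2 fun x hxE hxW => hxW (EsubW nk hxE))
  have hVW : ∀ nk, V nk ⊆ W nk.1 := fun nk x hx => by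
    by_contra h
    exact Set.disjoint_left.1 (hVdisj nk) hx h
  -- enumerate pairs and disjointify
  set q : ℕ ≃ ℕ × ℕ := (Denumerable.eqv (ℕ × ℕ)).symm with hq
  set P' : ℕ → Set Y := fun j => V (q j) \ ⋃ i ∈ Finset.range j, V (q i) with hP'
  have P'clopen : ∀ j, IsClopen (P' j) :=
    fun j => (hVclopen (q j)).diff (isClopen_biUnion_finset fun i _ => hVclopen (q i))
  have P'subV : ∀ j, P' j ⊆ V (q j) := fun j => diff_subset
  have P'disj : ∀ {j j'}, j < j' → ∀ x, x ∈ P' j → x ∈ P' j' → False := by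
    intro j j' hjj' x hj hj'
    exact hj'.2 (mem_biUnion (Finset.mem_range.2 hjj') (P'subV j hj))
  have P'cov : ∀ x, ∃ j, x ∈ P' j := by
    intro x
    obtain ⟨nk, hnk⟩ := Ecov x
    have hne : ∃ j, x ∈ V (q j) := ⟨q.symm nk, by simpa using hEV nk hnk⟩
    refine ⟨Nat.find hne, Nat.find_spec hne, fun hmem => ?_⟩
    obtain ⟨i, hi, hxi⟩ := mem_iUnion₂.1 hmem
    exact Nat.find_min hne (Finset.mem_range.1 hi) hxi
  -- final partition
  refine ⟨ℕ × Y, fun ji => P' ji.1 ∩ D (q ji.1).1 ji.2, ?_, ?_, ?_, ?_⟩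
  · rintro ⟨j, i⟩
    set n := (q j).1
    constructor
    · -- closed
      apply isClosed_of_closure_subset
      intro z hz
      have hz' : z ∈ P' j ∩ closure (D n i) :=
        (closure_inter_subset_inter_closure _ _).trans
          (inter_subset_inter_left _ (P'clopen j).isClosed.closure_subset) hz
      have hzW : z ∈ W n := hVW (q j) (P'subV j hz'.1)
      obtain ⟨i₀, hzi₀⟩ := mem_iUnion.1 hzW
      refine ⟨hz'.1, ?_⟩
      rcases eq_or_ne i₀ i with rfl | hne
      · exact hzi₀
      · exfalso
        obtain ⟨w, hw, hdw⟩ := Metric.mem_closure_iff.1 hz'.2 _ (pow_pos n)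
        exact absurd hdw (not_lt.2 (sep n i₀ i hne z hzi₀ w hw))
    · exact (P'clopen j).isOpen.inter (Dopen _ _)
  · rintro ⟨j, i⟩ ⟨j', i'⟩ hne
    refine Set.disjoint_left.2 fun z hz hz' => ?_
    rcases eq_or_ne j j' with rfl | hjj'
    · have hii' : i ≠ i' := by
        intro h; exact hne (by rw [h])
      have := sep (q j).1 i i' hii' z hz.2 z hz'.2
      rw [dist_self] at this
      exact absurd this (not_le.2 (pow_pos _))
    · rcases hjj'.lt_or_gt with h | h
      · exact P'disj h z hz.1 hz'.1
      · exact P'disj h z hz'.1 hz.1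
  · intro x
    obtain ⟨j, hj⟩ := P'cov x
    have hxW : x ∈ W (q j).1 := hVW (q j) (P'subV j hj)
    obtain ⟨i, hi⟩ := mem_iUnion.1 hxW
    exact ⟨(j, i), hj, hi⟩
  · rintro ⟨j, i⟩ x hx y hy
    have hxb := HDS _ _ hx.2
    have hyb := HDS _ _ hy.2
    rw [hs, Metric.mem_ball] at hxb hyb
    have := dist_triangle x i y
    have h1 : dist i y = dist y i := dist_comm _ _
    linarith

namespace MetricCompat
variable {X : Type u} [t : TopologicalSpace X]

lemma dist_facts (d : MetricCompat X) :
    (∀ x, d.dist x x = 0) ∧ (∀ x y, d.dist x y = d.dist y x) ∧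
    (∀ x y z, d.dist x z ≤ d.dist x y + d.dist y z) ∧
    (∀ x y, d.dist x y = 0 → x = y) ∧ (∀ x y, 0 ≤ d.dist x y) := by
  letI := d.1
  exact ⟨fun x => dist_self x, fun x y => dist_comm x y, fun x y z => dist_triangle x y z,
    fun x y h => eq_of_dist_eq_zero h, fun x y => dist_nonneg⟩

lemma compat_isOpen (d : MetricCompat X) (s : Set X) :
    IsOpen s ↔ ∀ x ∈ s, ∃ ε > 0, ∀ y, d.dist x y < ε → y ∈ s := by
  obtain ⟨m, hm⟩ := d
  subst hm
  letI := m
  show IsOpen s ↔ ∀ x ∈ s, ∃ ε > 0, ∀ y, Dist.dist x y < ε → y ∈ s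
  rw [Metric.isOpen_iff]
  refine forall₂_congr fun x _ => exists_congr fun ε => and_congr_right fun _ => ?_
  constructor
  · intro h y hy
    exact h (by rwa [Metric.mem_ball, dist_comm])
  · intro h y hy
    exact h y (by rwa [Metric.mem_ball, dist_comm] at hy)

lemma isOpen_dball (d : MetricCompat X) (x : X) {ε : ℝ} (hε : 0 < ε) :
    IsOpen { y | d.dist x y < ε } := by
  obtain ⟨-, -, htri, -, -⟩ := d.dist_facts
  refine (compat_isOpen d _).2 fun z hz => ⟨ε - d.dist x z, by simpa using hz, fun y hy => ?_⟩
  have := htri x z y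
  simp only [mem_setOf_eq] at hz ⊢
  linarith

lemma clopen_partition_compat (hX : StronglyZeroDim X) (d : MetricCompat X) {η : ℝ}
    (hη : 0 < η) :
    ∃ (ι : Type u) (P : ι → Set X), (∀ i, IsClopen (P i)) ∧ Pairwise (Function.onFun Disjoint P) ∧
      (∀ x, ∃ i, x ∈ P i) ∧ ∀ i, ∀ x ∈ P i, ∀ y ∈ P i, d.dist x y ≤ η := by
  obtain ⟨m, hm⟩ := d
  subst hm
  letI := m
  exact clopen_partition_of_stronglyZeroDim hX hη

/-- The perturbation lemma: near any compatible metric there is one with a uniform gap. -/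
lemma exists_gap_approx (hX : StronglyZeroDim X) (d : MetricCompat X) {η : ℝ} (hη : 0 < η) :
    ∃ e : MetricCompat X, (∀ x y, |e.dist x y - d.dist x y| ≤ η) ∧
      ∀ p x, e.dist p x ∉ Ioo (η / 2) η := by
  classical
  obtain ⟨hself, hcomm, htri, heq, hnonneg⟩ := d.dist_facts
  obtain ⟨ι, P, hPc, hPd, hPcov, hPmesh⟩ := clopen_partition_compat hX d (half_pos hη)
  choose c hc using hPcov
  have hsame : ∀ {x : X} {i : ι}, x ∈ P i → c x = i := by
    intro x i hx
    by_contra hne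
    exact Set.disjoint_left.1 (hPd hne) (hc x) hx
  set D : X → X → ℝ := fun x y => if c x = c y then d.dist x y else max (d.dist x y) η with hD
  have Dsame : ∀ {x y}, c x = c y → D x y = d.dist x y := by
    intro x y h; simp only [hD]; rw [if_pos h]
  have Ddiff : ∀ {x y}, c x ≠ c y → D x y = max (d.dist x y) η := by
    intro x y h; simp only [hD]; rw [if_neg h]
  have hDge : ∀ x y, d.dist x y ≤ D x y := by
    intro x y
    by_cases h : c x = c y
    · rw [Dsame h]
    · rw [Ddiff h]; exact le_max_left _ _
  have hDle : ∀ x y, D x y ≤ max (d.dist x y) η := by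
    intro x y
    by_cases h : c x = c y
    · rw [Dsame h]; exact le_max_left _ _
    · rw [Ddiff h]
  have Dself : ∀ x, D x x = 0 := fun x => by rw [Dsame rfl, hself]
  have Dcomm : ∀ x y, D x y = D y x := by
    intro x y
    by_cases h : c x = c y
    · rw [Dsame h, Dsame h.symm, hcomm]
    · rw [Ddiff h, Ddiff (Ne.symm h), hcomm]
  have Dtri : ∀ x y z, D x z ≤ D x y + D y z := by
    intro x y z
    have hxz := htri x y z
    by_cases hxy : c x = c y <;> by_cases hyz : c y = c z
    · rw [Dsame (hxy.trans hyz), Dsame hxy, Dsame hyz]; exact hxz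
    · have hne : c x ≠ c z := fun h => hyz (hxy.symm.trans h)
      rw [Ddiff hne, Dsame hxy, Ddiff hyz]
      have h1 := le_max_left (d.dist y z) η
      have h2 := le_max_right (d.dist y z) η
      have h3 := hnonneg x y
      exact max_le (by linarith) (by linarith)
    · have hne : c x ≠ c z := fun h => hxy (h.trans hyz.symm)
      rw [Ddiff hne, Ddiff hxy, Dsame hyz]
      have h1 := le_max_left (d.dist x y) η
      have h2 := le_max_right (d.dist x y) η
      have h3 := hnonneg y z
      exact max_le (by linarith) (by linarith)
    · have h1 := le_max_left (d.dist x y) η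
      have h2 := le_max_right (d.dist x y) η
      have h3 := le_max_left (d.dist y z) η
      have h4 := hnonneg y z
      have h5 : (0:ℝ) ≤ max (d.dist y z) η := le_trans h4 h3
      refine le_trans (hDle x z) ?_
      rw [Ddiff hxy, Ddiff hyz]
      exact max_le (by linarith) (by linarith)
  have Deq : ∀ x y, D x y = 0 → x = y := by
    intro x y h
    by_cases hxy : c x = c y
    · exact heq x y (by rwa [Dsame hxy] at h)
    · rw [Ddiff hxy] at h
      have := le_max_right (d.dist x y) η
      linarith
  -- topology compatibility
  have Htop : ∀ s : Set X, IsOpen s ↔ ∀ x ∈ s, ∃ ε > 0, ∀ y, D x y < ε → y ∈ s := by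
    intro s
    constructor
    · intro hs x hx
      obtain ⟨ε, hε, h⟩ := (compat_isOpen d s).1 hs x hx
      exact ⟨ε, hε, fun y hy => h y (lt_of_le_of_lt (hDge x y) hy)⟩
    · intro h
      rw [isOpen_iff_forall_mem_open]
      intro x hx
      obtain ⟨ε, hε, hsub⟩ := h x hx
      refine ⟨P (c x) ∩ { y | d.dist x y < ε }, ?_, ?_, ?_⟩
      · intro y hy
        have hcy : c x = c y := (hsame hy.1).symm
        exact hsub y (by rw [Dsame hcy]; exact hy.2)
      · exact (hPc (c x)).isOpen.inter (isOpen_dball d x hε)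
      · exact ⟨hc x, by simp [hself x, hε]⟩
  set m : MetricSpace X := MetricSpace.ofDistTopology D Dself Dcomm Dtri Htop Deq with hm
  refine ⟨⟨m, rfl⟩, ?_, ?_⟩
  · intro x y
    show |D x y - d.dist x y| ≤ η
    rw [abs_sub_le_iff]
    constructor
    · have := hDle x y
      have h1 := le_max_left (d.dist x y) η
      have h2 := le_max_right (d.dist x y) η
      cases max_cases (d.dist x y) η with
      | inl h => rw [h.1] at this; linarith [hη.le]
      | inr h => rw [h.1] at this; linarith [hnonneg x y]
    · have := hDge x y
      linarith [hη.le]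
  · intro p x
    show D p x ∉ Ioo (η / 2) η
    rintro ⟨h1, h2⟩
    by_cases h : c p = c x
    · rw [Dsame h] at h1 h2
      have hxP : x ∈ P (c p) := by rw [h]; exact hc x
      have := hPmesh (c p) p (hc p) x hxP
      linarith
    · rw [Ddiff h] at h2
      have := le_max_right (d.dist p x) η
      linarith

def gapSet (X : Type u) [TopologicalSpace X] (n : ℕ) : Set (MetricCompat X) :=
  { e | ∃ a b : ℝ, 0 < a ∧ a < b ∧ b < 1 / (n + 1 : ℝ) ∧ ∀ p x, e.dist p x ∉ Ioo a b }

lemma isOpen_gapSet (n : ℕ) : IsOpen (gapSet X n) := by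
  rw [isOpen_iff_forall_mem_open]
  rintro e ⟨a, b, ha, hab, hb, hgap⟩
  set δ : ℝ := (b - a) / 3 with hδ
  have hδ0 : 0 < δ := by rw [hδ]; linarith
  refine ⟨{ e' | supDist e e' < ENNReal.ofReal δ }, ?_, isOpen_ball e (ENNReal.ofReal_pos.2 hδ0),
    ?_⟩
  · intro e' he'
    refine ⟨a + δ, b - δ, by linarith, by linarith, by linarith, fun p x hpx => ?_⟩
    have habs := abs_lt_of_supDist_lt hδ0 he' p x
    rw [abs_sub_lt_iff] at habs
    obtain ⟨h1, h2⟩ := hpx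
    exact hgap p x ⟨by linarith [habs.1, habs.2], by linarith [habs.1, habs.2]⟩
  · show supDist e e < ENNReal.ofReal δ
    rw [supDist_self]
    exact ENNReal.ofReal_pos.2 hδ0

lemma dense_gapSet (hX : StronglyZeroDim X) (n : ℕ) : Dense (gapSet X n) := by
  rw [dense_iff_inter_open]
  rintro U hU ⟨d, hd⟩
  obtain ⟨r, hr, hball⟩ := exists_ball_subset hU d hd
  obtain ⟨ρ, hρ1, hρ2⟩ := exists_between hr
  have hρtop : ρ ≠ ⊤ := fun h => (h ▸ hρ2).not_ge le_top
  have hρreal : 0 < ρ.toReal := ENNReal.toReal_pos hρ1.ne' hρtop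
  have hn1 : (0:ℝ) < 1 / (n + 1 : ℝ) := by positivity
  set η : ℝ := min ρ.toReal (1 / (n + 1 : ℝ)) / 2 with hη
  have hη0 : 0 < η := by rw [hη]; positivity
  have hηn : η < 1 / (n + 1 : ℝ) := by
    rw [hη]
    have := min_le_right ρ.toReal (1 / (n + 1 : ℝ))
    linarith
  have hηρ : ENNReal.ofReal η ≤ ρ := by
    refine ENNReal.ofReal_le_of_le_toReal ?_
    rw [hη]
    have := min_le_left ρ.toReal (1 / (n + 1 : ℝ))
    linarith
  obtain ⟨e, happrox, hgap⟩ := exists_gap_approx hX d hη0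
  refine ⟨e, hball ?_, η / 2, η, by linarith, by linarith, hηn, hgap⟩
  exact lt_of_le_of_lt (le_trans (supDist_le_ofReal happrox) hηρ) hρ2

lemma gapLike_of_mem (e : MetricCompat X) (h : ∀ n : ℕ, e ∈ gapSet X n) : GapLike e := by
  rintro p ⟨U, hU, hU0, hUsub⟩
  obtain ⟨V, hVopen, hV0, hVsub⟩ := mem_nhdsWithin.1 hU
  obtain ⟨ε, hε, hballV⟩ := Metric.isOpen_iff.1 hVopen 0 hV0
  obtain ⟨n, hn⟩ := exists_nat_one_div_lt hε
  obtain ⟨a, b, ha, hab, hb, hgap⟩ := h n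
  have hmemU : (a + b) / 2 ∈ U := by
    refine hVsub ⟨hballV ?_, ?_⟩
    · rw [Metric.mem_ball, Real.dist_eq]
      rw [abs_of_nonneg (by linarith)]
      linarith
    · exact mem_Ici.2 (by linarith)
  have hcl := hUsub hmemU
  obtain ⟨v, ⟨x, hx⟩, hv⟩ := Metric.mem_closure_iff.1 hcl ((b - a) / 2) (by linarith)
  rw [Real.dist_eq, abs_sub_lt_iff] at hv
  exact hgap p x (by rw [hx]; exact ⟨by linarith [hv.1, hv.2], by linarith [hv.1, hv.2]⟩)

end MetricCompat

/-- Theorem 1.2: for a strongly `0`-dimensional metrizable space `X`, the set of gap-like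
metrics is comeager in `(Met(X), D_X)`. -/
theorem gapLike_comeager
    {X : Type*} [TopologicalSpace X] [TopologicalSpace.MetrizableSpace X]
    (hX : StronglyZeroDim X) :
    { d : MetricCompat X | GapLike d } ∈ residual (MetricCompat X) := by
  have hres : (⋂ n : ℕ, MetricCompat.gapSet X n) ∈ residual (MetricCompat X) :=
    countable_iInter_mem.2 fun n =>
      residual_of_dense_open (MetricCompat.isOpen_gapSet n) (MetricCompat.dense_gapSet hX n)
  exact Filter.mem_of_superset hres fun e he =>
    MetricCompat.gapLike_of_mem e fun n => mem_iInter.1 he n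
end

section
/- Let X be a strongly 0-dimensional metrizable space, let d ∈ Met(X), and let ε > 0. Then there exist r ∈ (0,1) and a metric D ∈ Met(X) such that every value of D lies in the set E(ε/5, r), and sup_{x,y∈X} |d(x,y) − D(x,y)| ≤ ε. -/
open Set
open scoped ENNReal

/-- The set `O(η, u) = {0} ∪ {η·uⁿ : n ∈ ℤ≥0}`. -/
def OSet (η u : ℝ) : Set ℝ := {0} ∪ { x : ℝ | ∃ n : ℕ, x = η * u ^ n }

/-- The set `E(η, u) = η·ℤ≥0 + O(η, u) + O(η, u)`. -/
def ESet (η u : ℝ) : Set ℝ :=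
  { x : ℝ | ∃ (n : ℕ), ∃ a ∈ OSet η u, ∃ b ∈ OSet η u, x = η * n + a + b }

section AuxiliaryLemmas

open Metric in
lemma exists_clopen_partition {Y : Type*} [MetricSpace Y] (hY : StronglyZeroDim Y)
    {δ : ℝ} (hδ : 0 < δ) :
    ∃ P : Y → Set Y, (∀ x, x ∈ P x) ∧ (∀ x, IsClopen (P x)) ∧
      (∀ x y, y ∈ P x → P y = P x) ∧ (∀ x y, y ∈ P x → dist x y ≤ δ) := by
  classical
  obtain ⟨v, vo, vc, vlf, vu⟩ := precise_refinement (fun i : Y => ball i (δ/2))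
    (fun i => isOpen_ball)
    (iUnion_eq_univ_iff.2 fun x => ⟨x, mem_ball_self (by linarith)⟩)
  obtain ⟨w, hwU, hwo, hwc⟩ := exists_subset_iUnion_closure_subset isClosed_univ vo
    (fun x _ => vlf.point_finite x) (by rw [vc])
  have key : ∀ i, ∃ W : Set Y, IsClopen W ∧ closure (w i) ⊆ W ∧ W ⊆ v i := by
    intro i
    obtain ⟨W, hW, hsub, hdisj⟩ := hY (closure (w i)) (v i)ᶜ isClosed_closure
      (vo i).isClosed_compl (disjoint_compl_right.mono_left (hwc i))
    refine ⟨W, hW, hsub, fun x hx => by_contra fun h => ?_⟩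
    exact absurd (hdisj.le_bot ⟨hx, h⟩) (by simp)
  choose W hWclopen hWsub hWv using key
  have hWlf : LocallyFinite W := vlf.subset hWv
  have hWcov : ∀ x : Y, {i | x ∈ W i}.Nonempty := by
    intro x
    obtain ⟨i, hi⟩ := mem_iUnion.1 (hwU (mem_univ x))
    exact ⟨i, hWsub i (subset_closure hi)⟩
  set r : Y → Y → Prop := WellOrderingRel with hr
  have wf : WellFounded r := (WellOrderingRel.isWellOrder).wf
  set μ : Y → Y := fun x => wf.min {i | x ∈ W i} (hWcov x) with hμ
  set T : Y → Set Y := fun i => W i \ ⋃ j : {j // r j i}, W j with hT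
  have hmemT : ∀ x, x ∈ T (μ x) := by
    intro x
    refine ⟨wf.min_mem _ (hWcov x), ?_⟩
    rw [mem_iUnion]
    rintro ⟨⟨j, hj⟩, hxj⟩
    exact wf.not_lt_min {i | x ∈ W i} hxj hj
  have hTclopen : ∀ i, IsClopen (T i) := by
    intro i
    refine (hWclopen i).diff ⟨?_, isOpen_iUnion fun j => (hWclopen j).isOpen⟩
    exact (hWlf.comp_injective Subtype.val_injective).isClosed_iUnion
      fun j => (hWclopen j).isClosed
  have hμeq : ∀ x y, y ∈ T (μ x) → μ y = μ x := by
    intro x y hy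
    obtain ⟨hy1, hy2⟩ := hy
    have hmemy : μ x ∈ {i | y ∈ W i} := hy1
    have h1 : ¬ r (μ x) (μ y) := wf.not_lt_min _ hmemy
    have h2 : ¬ r (μ y) (μ x) := by
      intro hlt
      exact hy2 (mem_iUnion.2 ⟨⟨μ y, hlt⟩, wf.min_mem _ (hWcov y)⟩)
    rcases trichotomous_of r (μ y) (μ x) with h | h | h
    · exact absurd h h2
    · exact h
    · exact absurd h h1
  refine ⟨fun x => T (μ x), hmemT, fun x => hTclopen _, ?_, ?_⟩
  · intro x y hy
    simp only at hy ⊢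
    rw [hμeq x y hy]
  · intro x y hy
    have hx : x ∈ v (μ x) := hWv _ (wf.min_mem _ (hWcov x))
    have hy' : y ∈ v (μ x) := hWv _ hy.1
    have hx' := vu (μ x) hx
    have hy'' := vu (μ x) hy'
    rw [mem_ball] at hx' hy''
    calc dist x y ≤ dist x (μ x) + dist (μ x) y := dist_triangle _ _ _
      _ ≤ δ/2 + δ/2 := by rw [dist_comm (μ x) y]; exact add_le_add hx'.le hy''.le
      _ = δ := by ring

open Metric in
lemma exists_special_metric {Y : Type*} [MetricSpace Y] (hY : StronglyZeroDim Y)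
    {η : ℝ} (hη : 0 < η) :
    ∃ D : Y → Y → ℝ,
      (∀ x, D x x = 0) ∧ (∀ x y, D x y = D y x) ∧
      (∀ x y z, D x z ≤ D x y + D y z) ∧
      (∀ x y, D x y = 0 → x = y) ∧
      (∀ s : Set Y, IsOpen s ↔ ∀ x ∈ s, ∃ ε > 0, ∀ y, D x y < ε → y ∈ s) ∧
      (∀ x y, D x y ∈ ESet η (1/2)) ∧
      (∀ x y, |dist x y - D x y| ≤ 3 * η) := by
  classical
  have hQ : ∀ n : ℕ, ∃ P : Y → Set Y, (∀ x, x ∈ P x) ∧ (∀ x, IsClopen (P x)) ∧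
      (∀ x y, y ∈ P x → P y = P x) ∧ (∀ x y, y ∈ P x → dist x y ≤ η * (1/2)^n) :=
    fun n => exists_clopen_partition hY (by positivity)
  choose Q hQmem hQclopen hQeq hQdiam using hQ
  -- nested partitions
  set P : ℕ → Y → Set Y := fun n x => ⋂ k ∈ Finset.range (n+1), Q k x with hPdef
  have hPmem : ∀ n x, x ∈ P n x := fun n x => mem_iInter₂.2 fun k _ => hQmem k x
  have hPsubQ : ∀ n x k, k ≤ n → P n x ⊆ Q k x := by
    intro n x k hk
    intro y hy
    exact mem_iInter₂.1 hy k (Finset.mem_range.2 (Nat.lt_succ_of_le hk))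
  have hPclopen : ∀ n x, IsClopen (P n x) := by
    intro n x
    exact isClopen_biInter_finset fun k _ => hQclopen k x
  have hPeq : ∀ n x y, y ∈ P n x → P n y = P n x := by
    intro n x y hy
    refine iInter₂_congr fun k hk => ?_
    exact hQeq k x y (mem_iInter₂.1 hy k hk)
  have hPdiam : ∀ n x y, y ∈ P n x → dist x y ≤ η * (1/2)^n :=
    fun n x y hy => hQdiam n x y (hPsubQ n x n le_rfl hy)
  have hPanti : ∀ m n x, m ≤ n → P n x ⊆ P m x := by
    intro m n x hmn y hy
    exact mem_iInter₂.2 fun k hk => mem_iInter₂.1 hy k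
      (Finset.mem_range.2 (lt_of_lt_of_le (Finset.mem_range.1 hk) (by omega)))
  have hPsymm : ∀ n x y, y ∈ P n x → x ∈ P n y := by
    intro n x y hy
    rw [hPeq n x y hy]; exact hPmem n x
  -- the ultrametric part
  have hex : ∀ x y : Y, x ≠ y → ∃ n, y ∉ P n x := by
    intro x y hxy
    have hd : 0 < dist x y / η := div_pos (dist_pos.2 hxy) hη
    obtain ⟨n, hn⟩ := exists_pow_lt_of_lt_one hd (by norm_num : (1/2 : ℝ) < 1)
    refine ⟨n, fun hmem => ?_⟩
    have := hPdiam n x y hmem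
    rw [lt_div_iff₀ hη] at hn
    nlinarith
  set σ : Y → Y → ℝ := fun x y =>
    if h : x = y then 0 else η * (1/2)^(Nat.find (hex x y h)) with hσdef
  have hσself : ∀ x, σ x x = 0 := fun x => dif_pos rfl
  have hσval : ∀ x y (h : x ≠ y), σ x y = η * (1/2)^(Nat.find (hex x y h)) :=
    fun x y h => dif_neg h
  have hσpos : ∀ x y, x ≠ y → 0 < σ x y := by
    intro x y h; rw [hσval x y h]; positivity
  have hσnonneg : ∀ x y, 0 ≤ σ x y := by
    intro x y
    rcases eq_or_ne x y with rfl | h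
    · rw [hσself]
    · exact (hσpos x y h).le
  have hσle : ∀ x y, σ x y ≤ η := by
    intro x y
    rcases eq_or_ne x y with rfl | h
    · rw [hσself]; exact hη.le
    · rw [hσval x y h]
      nlinarith [pow_le_one₀ (by norm_num : (0:ℝ) ≤ 1/2) (by norm_num : (1/2:ℝ) ≤ 1)
        (n := Nat.find (hex x y h))]
  have hfind_symm : ∀ x y (h : x ≠ y), Nat.find (hex x y h) = Nat.find (hex y x h.symm) := by
    intro x y h
    apply le_antisymm
    · exact Nat.find_min' _ (fun hmem => Nat.find_spec (hex y x h.symm) (hPsymm _ _ _ hmem))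
    · exact Nat.find_min' _ (fun hmem => Nat.find_spec (hex x y h) (hPsymm _ _ _ hmem))
  have hσsymm : ∀ x y, σ x y = σ y x := by
    intro x y
    rcases eq_or_ne x y with rfl | h
    · rfl
    · rw [hσval x y h, hσval y x h.symm, hfind_symm x y h]
  -- if y in a deep piece of x, σ is small
  have hσsmall : ∀ n x y, y ∈ P n x → σ x y ≤ η * (1/2)^(n+1) := by
    intro n x y hy
    rcases eq_or_ne x y with rfl | h
    · rw [hσself]; positivity
    · rw [hσval x y h]
      have hfind : n < Nat.find (hex x y h) := by
        rw [Nat.lt_find_iff]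
        intro m hm hnot
        exact hnot (hPanti m n x hm hy)
      have : (1/2 : ℝ)^(Nat.find (hex x y h)) ≤ (1/2)^(n+1) :=
        pow_le_pow_of_le_one (by norm_num) (by norm_num) hfind
      nlinarith
  -- conversely, σ small (strictly) forces membership in a deep piece
  have hσmem : ∀ n x y, σ x y < η * (1/2)^n → y ∈ P n x := by
    intro n x y hlt
    rcases eq_or_ne x y with rfl | h
    · exact hPmem n x
    · rw [hσval x y h] at hlt
      have hn : n < Nat.find (hex x y h) := by
        by_contra hcon
        push_neg at hcon
        have : (1/2:ℝ)^(Nat.find (hex x y h)) ≥ (1/2)^n :=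
          pow_le_pow_of_le_one (by norm_num) (by norm_num) hcon
        nlinarith
      have := Nat.find_min (hex x y h) hn
      simpa using this
  -- ultrametric inequality
  have hσtri : ∀ x y z, σ x z ≤ max (σ x y) (σ y z) := by
    intro x y z
    rcases eq_or_ne x z with rfl | hxz
    · rw [hσself]
      exact le_max_of_le_left (hσnonneg x y)
    rcases eq_or_ne x y with rfl | hxy
    · exact le_max_right _ _
    rcases eq_or_ne y z with rfl | hyz
    · exact le_max_left _ _
    rw [hσval x z hxz, hσval x y hxy, hσval y z hyz]
    have hkey : min (Nat.find (hex x y hxy)) (Nat.find (hex y z hyz)) ≤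
        Nat.find (hex x z hxz) := by
      rw [Nat.le_find_iff]
      intro m hm hnot
      have hy : y ∈ P m x := by
        have := Nat.find_min (hex x y hxy) (lt_of_lt_of_le hm (min_le_left _ _))
        simpa using this
      have hz : z ∈ P m y := by
        have := Nat.find_min (hex y z hyz) (lt_of_lt_of_le hm (min_le_right _ _))
        simpa using this
      rw [hPeq m x y hy] at hz
      exact hnot hz
    rcases le_total (Nat.find (hex x y hxy)) (Nat.find (hex y z hyz)) with hc | hc
    · refine le_max_of_le_left ?_
      rw [min_eq_left hc] at hkey
      have : (1/2:ℝ)^(Nat.find (hex x z hxz)) ≤ (1/2)^(Nat.find (hex x y hxy)) :=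
        pow_le_pow_of_le_one (by norm_num) (by norm_num) hkey
      nlinarith
    · refine le_max_of_le_right ?_
      rw [min_eq_right hc] at hkey
      have : (1/2:ℝ)^(Nat.find (hex x z hxz)) ≤ (1/2)^(Nat.find (hex y z hyz)) :=
        pow_le_pow_of_le_one (by norm_num) (by norm_num) hkey
      nlinarith
  -- representatives of level-0 pieces
  set rep : Y → Y := fun x => (⟨x, hQmem 0 x⟩ : (Q 0 x).Nonempty).choose with hrepdef
  have hrepmem : ∀ x, rep x ∈ Q 0 x :=
    fun x => (⟨x, hQmem 0 x⟩ : (Q 0 x).Nonempty).choose_spec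
  have hrepeq : ∀ x y, y ∈ Q 0 x → rep y = rep x := by
    intro x y hy
    have hQ0 : Q 0 y = Q 0 x := hQeq 0 x y hy
    simp only [hrepdef]
    congr 1
  have hrepdist : ∀ x, dist x (rep x) ≤ η := by
    intro x
    have := hQdiam 0 x (rep x) (hrepmem x)
    simpa using this
  -- the coarse part
  set C : Y → Y → ℝ := fun x y => η * ⌈dist (rep x) (rep y) / η⌉₊ with hCdef
  have hCnonneg : ∀ x y, 0 ≤ C x y := by intro x y; positivity
  have hCself : ∀ x, C x x = 0 := by
    intro x; simp [hCdef]
  have hCsymm : ∀ x y, C x y = C y x := by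
    intro x y; simp [hCdef, dist_comm]
  have hCtri : ∀ x y z, C x z ≤ C x y + C y z := by
    intro x y z
    simp only [hCdef]
    rw [← mul_add]
    have h1 : dist (rep x) (rep z) / η ≤
        (⌈dist (rep x) (rep y) / η⌉₊ + ⌈dist (rep y) (rep z) / η⌉₊ : ℝ) := by
      calc dist (rep x) (rep z) / η ≤ (dist (rep x) (rep y) + dist (rep y) (rep z)) / η := by
            gcongr
            exact dist_triangle _ _ _
        _ = dist (rep x) (rep y) / η + dist (rep y) (rep z) / η := add_div _ _ _
        _ ≤ _ := add_le_add (Nat.le_ceil _) (Nat.le_ceil _)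
    have h2 : ⌈dist (rep x) (rep z) / η⌉₊ ≤
        ⌈dist (rep x) (rep y) / η⌉₊ + ⌈dist (rep y) (rep z) / η⌉₊ := by
      exact Nat.ceil_le.2 (by exact_mod_cast h1)
    have := (Nat.cast_le (α := ℝ)).2 h2
    push_cast at this ⊢
    nlinarith
  have hCzero : ∀ x y, y ∈ Q 0 x → C x y = 0 := by
    intro x y hy
    simp only [hCdef]
    rw [hrepeq x y hy]
    simp
  have hCub : ∀ x y, C x y ≤ dist x y + 3 * η := by
    intro x y
    simp only [hCdef]
    have h1 : (⌈dist (rep x) (rep y) / η⌉₊ : ℝ) < dist (rep x) (rep y) / η + 1 :=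
      Nat.ceil_lt_add_one (by positivity)
    have h2 : dist (rep x) (rep y) ≤ dist x y + 2 * η := by
      calc dist (rep x) (rep y) ≤ dist (rep x) x + dist x y + dist y (rep y) :=
            dist_triangle4 _ _ _ _
        _ ≤ η + dist x y + η := by
            refine add_le_add (add_le_add ?_ le_rfl) ?_
            · rw [dist_comm]; exact hrepdist x
            · exact hrepdist y
        _ = dist x y + 2 * η := by ring
    have h3 : η * (⌈dist (rep x) (rep y) / η⌉₊ : ℝ) < dist (rep x) (rep y) + η := by
      have := mul_lt_mul_of_pos_left h1 hη
      rw [mul_add, mul_one, mul_div_cancel₀] at this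
      · exact this
      · exact hη.ne'
    linarith
  have hClb : ∀ x y, dist x y - 2 * η ≤ C x y := by
    intro x y
    simp only [hCdef]
    have h1 : dist (rep x) (rep y) / η ≤ (⌈dist (rep x) (rep y) / η⌉₊ : ℝ) := Nat.le_ceil _
    have h2 : dist x y ≤ dist (rep x) (rep y) + 2 * η := by
      calc dist x y ≤ dist x (rep x) + dist (rep x) (rep y) + dist (rep y) y :=
            dist_triangle4 _ _ _ _
        _ ≤ η + dist (rep x) (rep y) + η := by
            refine add_le_add (add_le_add (hrepdist x) le_rfl) ?_
            rw [dist_comm]; exact hrepdist y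
        _ = dist (rep x) (rep y) + 2 * η := by ring
    have h3 : dist (rep x) (rep y) ≤ η * (⌈dist (rep x) (rep y) / η⌉₊ : ℝ) := by
      rw [← div_le_iff₀' hη]
      exact h1
    linarith
  -- the metric D
  refine ⟨fun x y => max (C x y) (σ x y), ?_, ?_, ?_, ?_, ?_, ?_, ?_⟩
  · intro x; show max (C x x) (σ x x) = 0; rw [hCself, hσself]; simp
  · intro x y; show max (C x y) (σ x y) = max (C y x) (σ y x); rw [hCsymm, hσsymm]
  · intro x y z
    show max (C x z) (σ x z) ≤ max (C x y) (σ x y) + max (C y z) (σ y z)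
    refine max_le ?_ ?_
    · exact (hCtri x y z).trans (add_le_add (le_max_left _ _) (le_max_left _ _))
    · refine (hσtri x y z).trans ?_
      rcases max_cases (σ x y) (σ y z) with ⟨he, _⟩ | ⟨he, _⟩ <;> rw [he]
      · calc σ x y ≤ max (C x y) (σ x y) := le_max_right _ _
          _ ≤ _ := le_add_of_nonneg_right (le_max_of_le_right (hσnonneg y z))
      · calc σ y z ≤ max (C y z) (σ y z) := le_max_right _ _
          _ ≤ _ := le_add_of_nonneg_left (le_max_of_le_right (hσnonneg x y))
  · intro x y h
    replace h : max (C x y) (σ x y) = 0 := h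
    by_contra hxy
    have := hσpos x y hxy
    have hle : σ x y ≤ max (C x y) (σ x y) := le_max_right _ _
    rw [h] at hle
    linarith
  · -- topology characterization
    intro s
    show IsOpen s ↔ ∀ x ∈ s, ∃ ε > 0, ∀ y, max (C x y) (σ x y) < ε → y ∈ s
    constructor
    · intro hs x hx
      obtain ⟨ε', hε', hball⟩ := Metric.isOpen_iff.1 hs x hx
      have h2 : 0 < ε' / η := div_pos hε' hη
      obtain ⟨n, hn⟩ := exists_pow_lt_of_lt_one h2 (by norm_num : (1/2 : ℝ) < 1)
      refine ⟨η * (1/2)^n, by positivity, fun y hy => ?_⟩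
      have hσy : σ x y < η * (1/2)^n := lt_of_le_of_lt (le_max_right _ _) hy
      have hmem := hσmem n x y hσy
      have hd := hPdiam n x y hmem
      apply hball
      rw [mem_ball, dist_comm]
      rw [lt_div_iff₀ hη] at hn
      nlinarith
    · intro h
      rw [isOpen_iff_forall_mem_open]
      intro x hx
      obtain ⟨ε, hε, hball⟩ := h x hx
      have h2 : 0 < ε / η := div_pos hε hη
      obtain ⟨n, hn⟩ := exists_pow_lt_of_lt_one h2 (by norm_num : (1/2 : ℝ) < 1)
      refine ⟨P n x, fun y hy => ?_, (hPclopen n x).isOpen, hPmem n x⟩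
      apply hball
      have hc : C x y = 0 := hCzero x y (hPsubQ n x 0 (Nat.zero_le n) hy)
      have hσ : σ x y ≤ η * (1/2)^(n+1) := hσsmall n x y hy
      have : max (C x y) (σ x y) ≤ η * (1/2)^(n+1) := by
        rw [hc]
        exact max_le (by positivity) hσ
      refine lt_of_le_of_lt this ?_
      rw [lt_div_iff₀ hη] at hn
      have : (1/2:ℝ)^(n+1) < (1/2)^n := by
        apply pow_lt_pow_right_of_lt_one₀ <;> norm_num
      nlinarith
  · -- values in ESet
    intro x y
    show max (C x y) (σ x y) ∈ _
    rcases le_total (σ x y) (C x y) with hc | hc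
    · rw [max_eq_left hc]
      exact ⟨⌈dist (rep x) (rep y) / η⌉₊, 0, Or.inl rfl, 0, Or.inl rfl, by simp [hCdef]⟩
    · rw [max_eq_right hc]
      rcases eq_or_ne x y with rfl | h
      · rw [hσself]
        exact ⟨0, 0, Or.inl rfl, 0, Or.inl rfl, by simp⟩
      · rw [hσval x y h]
        exact ⟨0, η * (1/2)^(Nat.find (hex x y h)), Or.inr ⟨_, rfl⟩, 0, Or.inl rfl, by
          simp⟩
  · -- distance bound
    intro x y
    show |dist x y - max (C x y) (σ x y)| ≤ 3 * η
    rw [abs_sub_le_iff]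
    constructor
    · have := hClb x y
      have h2 : C x y ≤ max (C x y) (σ x y) := le_max_left _ _
      linarith
    · have h1 : C x y ≤ dist x y + 3 * η := hCub x y
      have h2 : σ x y ≤ η := hσle x y
      have : max (C x y) (σ x y) ≤ dist x y + 3 * η :=
        max_le h1 (by nlinarith [dist_nonneg (x := x) (y := y)])
      linarith

end AuxiliaryLemmas

/-- Theorem 2.9: for a strongly `0`-dimensional metrizable space `X`, every `d ∈ Met(X)` is
`ε`-approximated by a metric `D ∈ Met(X)` taking values in `E(ε/5, r)` for some `r ∈ (0,1)`. -/
theorem dense_approx_by_ESet_valued_metric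
    {X : Type*} [TopologicalSpace X] [TopologicalSpace.MetrizableSpace X]
    (hX : StronglyZeroDim X) (d : MetricCompat X) (ε : ℝ) (hε : 0 < ε) :
    ∃ r ∈ Set.Ioo (0 : ℝ) 1, ∃ D : MetricCompat X,
      (∀ x y : X, D.dist x y ∈ ESet (ε / 5) r) ∧
      (⨆ p : X × X, ENNReal.ofReal |d.dist p.1 p.2 - D.dist p.1 p.2|) ≤
        ENNReal.ofReal ε := by
  obtain ⟨m, hm⟩ := d
  subst hm
  letI : MetricSpace X := m
  have hη : (0:ℝ) < ε / 5 := by linarith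
  obtain ⟨D, hDself, hDsymm, hDtri, hDeq, hDtop, hDval, hDbound⟩ :=
    exists_special_metric hX hη
  refine ⟨1/2, by norm_num, ⟨MetricSpace.ofDistTopology D hDself hDsymm hDtri hDtop hDeq, rfl⟩,
    fun x y => hDval x y, ?_⟩
  refine iSup_le fun p => ?_
  apply ENNReal.ofReal_le_ofReal
  calc |MetricCompat.dist ⟨m, rfl⟩ p.1 p.2 -
        MetricCompat.dist ⟨MetricSpace.ofDistTopology D hDself hDsymm hDtri hDtop hDeq, rfl⟩ p.1 p.2|
      = |dist p.1 p.2 - D p.1 p.2| := rfl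
    _ ≤ 3 * (ε / 5) := hDbound p.1 p.2
    _ ≤ ε := by linarith
end
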